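/- Let Z = {z ∈ ℝ^{n_z} : Hz ≤ h} be a nonempty polyhedron with h ≥ 0, and let p(ζ) = max{λᵀζ − η : (λ,η) ∈ V} with V = {(λ,η) ∈ ℝ^{n_z}×ℝ₊ : ∃μ ∈ ℝ^{n_μ}, Mλ + Nμ + sη ≤ t}, where V is bounded, contains the origin, and there exists μ̂ with Nμ̂ < t. Then for every a ∈ ℝ^{n_z} and every k ≥ 0, max_{z ∈ Z} ( aᵀz − k·p(z) ) = min{ βᵀh + η : β ∈ ℝ^{n_h}, β ≥ 0, η ≥ 0, and (a − Hᵀβ, η, k) ∈ V̄ }, where V̄ = {(λ, η, k) ∈ ℝ^{n_z} × ℝ₊ × ℝ₊ : ∃μ ∈ ℝ^{n_μ} with Mλ + Nμ + sη ≤ t·k} is the perspective cone of V. -/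

import Mathlib

open Matrix BigOperators Finset


lemma conic_caratheodory {ι : Type*} [Fintype ι] [DecidableEq ι] {E : Type*}
    [AddCommGroup E] [Module ℝ E] (v : ι → E) :
    ∀ x : ι → ℝ, 0 ≤ x → ∃ x' : ι → ℝ, 0 ≤ x' ∧ (∑ j, x' j • v j = ∑ j, x j • v j) ∧
      LinearIndependent ℝ (fun j : {j // x' j ≠ 0} => v j) := by
  suffices H : ∀ N : ℕ, ∀ x : ι → ℝ, (univ.filter fun j => x j ≠ 0).card ≤ N → 0 ≤ x →
      ∃ x' : ι → ℝ, 0 ≤ x' ∧ (∑ j, x' j • v j = ∑ j, x j • v j) ∧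
      LinearIndependent ℝ (fun j : {j // x' j ≠ 0} => v j) by
    intro x hx; exact H _ x le_rfl hx
  intro N
  induction N with
  | zero =>
    intro x hcard hx
    refine ⟨x, hx, rfl, ?_⟩
    have hempty : ∀ j, x j = 0 := by
      intro j
      by_contra hj
      have : j ∈ univ.filter fun j => x j ≠ 0 := by simp [hj]
      have := Finset.card_pos.mpr ⟨j, this⟩
      omega
    have : IsEmpty {j // x j ≠ 0} := ⟨fun j => j.2 (hempty j.1)⟩
    exact linearIndependent_empty_type
  | succ N ih =>
    intro x hcard hx
    by_cases hli : LinearIndependent ℝ (fun j : {j // x j ≠ 0} => v j)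
    · exact ⟨x, hx, rfl, hli⟩
    · obtain ⟨g, hg0, i0, hgi0⟩ := Fintype.not_linearIndependent_iff.mp hli
      -- extend g to ι, supported on support of x
      set g' : ι → ℝ := fun j => if hj : x j ≠ 0 then g ⟨j, hj⟩ else 0 with hg'
      have hg'supp : ∀ j, x j = 0 → g' j = 0 := by
        intro j hj; simp [hg', hj]
      have hg'sum : ∑ j, g' j • v j = 0 := by
        rw [← hg0]
        have h1 : ∑ j : ι, g' j • v j = ∑ j ∈ univ.filter (fun j => x j ≠ 0), g' j • v j := by
          symm
          apply Finset.sum_filter_of_ne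
          intro j _ hj
          by_contra hxj
          exact hj (by rw [hg'supp j hxj]; simp)
        rw [h1, Finset.sum_subtype (univ.filter fun j => x j ≠ 0)
          (p := fun j => x j ≠ 0) (by simp) (fun j => g' j • v j)]
        refine Finset.sum_congr rfl (fun j _ => ?_)
        have hj : x j.1 ≠ 0 := j.2
        simp only [hg', dif_pos hj]
      -- get a direction with a positive entry, supported on supp x
      have hg'i0 : g' i0.1 ≠ 0 := by
        simpa only [hg', dif_pos i0.2] using hgi0
      obtain ⟨d, hdsum, hdsupp, j1, hdj1⟩ :
          ∃ d : ι → ℝ, (∑ j, d j • v j = 0) ∧ (∀ j, x j = 0 → d j = 0) ∧ ∃ j, 0 < d j := by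
        rcases lt_or_ge 0 (g' i0.1) with hpos | hneg
        · exact ⟨g', hg'sum, hg'supp, i0.1, hpos⟩
        · refine ⟨-g', by simp [hg'sum], fun j hj => by simp [hg'supp j hj], i0.1, ?_⟩
          have : g' i0.1 < 0 := lt_of_le_of_ne hneg hg'i0
          simpa using this
      classical
      set F : Finset ι := univ.filter fun j => 0 < d j with hF
      have hFne : F.Nonempty := ⟨j1, by simp [hF, hdj1]⟩
      set τ : ℝ := F.inf' hFne fun j => x j / d j with hτ
      obtain ⟨j0, hj0F, hj0⟩ := F.exists_mem_eq_inf' hFne fun j => x j / d j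
      have hdj0 : 0 < d j0 := by
        have := hj0F; rw [hF] at this; simpa using this
      have hτ0 : 0 ≤ τ := by
        rw [hτ, hj0]
        exact div_nonneg (hx j0) hdj0.le
      set x' : ι → ℝ := fun j => x j - τ * d j with hx'
      have hx'0 : 0 ≤ x' := by
        intro j
        rcases lt_or_ge 0 (d j) with hdj | hdj
        · have hjF : j ∈ F := by simp [hF, hdj]
          have hle : τ ≤ x j / d j := by
            rw [hτ]; exact Finset.inf'_le _ hjF
          have := (le_div_iff₀ hdj).mp hle
          simp only [hx', Pi.zero_apply]
          linarith
        · have h1 : τ * d j ≤ 0 := mul_nonpos_of_nonneg_of_nonpos hτ0 hdj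
          have := hx j
          simp only [hx', Pi.zero_apply] at *
          linarith
      have hx'sum : ∑ j, x' j • v j = ∑ j, x j • v j := by
        simp only [hx', sub_smul, Finset.sum_sub_distrib]
        have : ∑ j, (τ * d j) • v j = τ • ∑ j, d j • v j := by
          rw [Finset.smul_sum]
          exact Finset.sum_congr rfl fun j _ => (smul_smul τ (d j) (v j)).symm
        rw [this, hdsum, smul_zero, sub_zero]
      have hsupp' : ∀ j, x' j ≠ 0 → x j ≠ 0 := by
        intro j hj hxj
        exact hj (by simp [hx', hxj, hdsupp j hxj])
      have hxj0 : x j0 ≠ 0 := by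
        intro hxj0
        exact hdj0.ne' (hdsupp j0 hxj0)
      have hx'j0 : x' j0 = 0 := by
        have hτeq : τ = x j0 / d j0 := by rw [hτ, hj0]
        simp only [hx', hτeq]
        field_simp
        ring
      have hcard' : (univ.filter fun j => x' j ≠ 0).card ≤ N := by
        have hss : (univ.filter fun j => x' j ≠ 0) ⊂ (univ.filter fun j => x j ≠ 0) := by
          refine Finset.ssubset_iff_of_subset ?_ |>.mpr ⟨j0, by simp [hxj0], by simp [hx'j0]⟩
          intro j hj
          simp only [Finset.mem_filter, Finset.mem_univ, true_and] at *
          exact hsupp' j hj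
        have := Finset.card_lt_card hss
        omega
      obtain ⟨x'', h1, h2, h3⟩ := ih x' hcard' hx'0
      exact ⟨x'', h1, by rw [h2, hx'sum], h3⟩

lemma isClosed_fg_cone {ι : Type*} [Fintype ι] [DecidableEq ι] {E : Type*}
    [NormedAddCommGroup E] [NormedSpace ℝ E] [FiniteDimensional ℝ E] (v : ι → E)
    (hcar : ∀ x : ι → ℝ, 0 ≤ x → ∃ x' : ι → ℝ, 0 ≤ x' ∧ (∑ j, x' j • v j = ∑ j, x j • v j) ∧
      LinearIndependent ℝ (fun j : {j // x' j ≠ 0} => v j)) :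
    IsClosed {b : E | ∃ x : ι → ℝ, 0 ≤ x ∧ ∑ j, x j • v j = b} := by
  have main : {b : E | ∃ x : ι → ℝ, 0 ≤ x ∧ ∑ j, x j • v j = b} =
      ⋃ S : {S : Finset ι // LinearIndependent ℝ (fun j : ↥S => v j)},
        (Fintype.linearCombination ℝ (fun j : ↥S.1 => v j)) '' {y | 0 ≤ y} := by
    ext b
    simp only [Set.mem_setOf_eq, Set.mem_iUnion, Set.mem_image]
    constructor
    · rintro ⟨x, hx, rfl⟩
      obtain ⟨x', hx'0, hsum, hli⟩ := hcar x hx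
      have hmem : ∀ j : ι, j ∈ univ.filter (fun j => x' j ≠ 0) → x' j ≠ 0 := by
        intro j hj; simpa using hj
      have hliS : LinearIndependent ℝ (fun j : ↥(univ.filter fun j => x' j ≠ 0) => v j) := by
        have hinj : Function.Injective
            (fun j : ↥(univ.filter fun j => x' j ≠ 0) => (⟨j.1, hmem j.1 j.2⟩ : {j // x' j ≠ 0})) := by
          intro j1 j2 hj
          simp only [Subtype.mk.injEq] at hj
          exact Subtype.ext hj
        exact hli.comp _ hinj
      refine ⟨⟨_, hliS⟩, fun j => x' j.1, fun j => hx'0 j.1, ?_⟩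
      rw [Fintype.linearCombination_apply, ← hsum]
      calc ∑ j : ↥(univ.filter fun j => x' j ≠ 0), x' j.1 • v j.1
          = ∑ j ∈ univ.filter (fun j => x' j ≠ 0), x' j • v j :=
            Finset.sum_coe_sort (univ.filter fun j => x' j ≠ 0) (fun j => x' j • v j)
        _ = ∑ j : ι, x' j • v j := by
            apply Finset.sum_subset (Finset.subset_univ _)
            intro j _ hj
            simp only [Finset.mem_filter, Finset.mem_univ, true_and, not_not] at hj
            simp [hj]
    · rintro ⟨S, y, hy, rfl⟩
      refine ⟨fun j => if hj : j ∈ S.1 then y ⟨j, hj⟩ else 0,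
        fun j => by dsimp; split <;> [exact hy _; rfl], ?_⟩
      rw [Fintype.linearCombination_apply]
      calc ∑ j : ι, (fun j => if hj : j ∈ S.1 then y ⟨j, hj⟩ else 0) j • v j
          = ∑ j ∈ S.1, (if hj : j ∈ S.1 then y ⟨j, hj⟩ else 0) • v j := by
            symm; apply Finset.sum_subset (Finset.subset_univ _)
            intro j _ hj; simp [hj]
        _ = ∑ j : ↥S.1, (if hj : j.1 ∈ S.1 then y ⟨j.1, hj⟩ else 0) • v j.1 :=
            (Finset.sum_coe_sort S.1 (fun j => (if hj : j ∈ S.1 then y ⟨j, hj⟩ else 0) • v j)).symm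
        _ = ∑ i : ↥S.1, y i • v i.1 := by
            apply Finset.sum_congr rfl; intro j _; rw [dif_pos j.2]
  rw [main]
  apply isClosed_iUnion_of_finite
  rintro ⟨S, hS⟩
  have hker : LinearMap.ker (Fintype.linearCombination ℝ (fun j : ↥S => v j)) = ⊥ := by
    rw [LinearMap.ker_eq_bot']
    intro y hy
    rw [Fintype.linearCombination_apply] at hy
    exact funext (Fintype.linearIndependent_iff.mp hS y hy)
  have hclosed : IsClosed {y : ↥S → ℝ | 0 ≤ y} := isClosed_Ici
  exact (LinearMap.isClosedEmbedding_of_injective hker).isClosedMap _ hclosed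

lemma mulVec_eq_sum_cols {m n : Type*} [Fintype m] [Fintype n]
    (A : Matrix m n ℝ) (x : n → ℝ) :
    A.mulVec x = ∑ j, x j • (fun i => A i j) := by
  ext i
  simp [Matrix.mulVec, dotProduct, Finset.sum_apply, mul_comm]

lemma farkas {m n : Type*} [Fintype m] [Fintype n] [DecidableEq m] [DecidableEq n]
    (A : Matrix m n ℝ) (b : m → ℝ)
    (hcl : IsClosed {c : m → ℝ | ∃ x : n → ℝ, 0 ≤ x ∧ ∑ j, x j • (fun i => A i j) = c})
    (hb : ¬ ∃ x : n → ℝ, 0 ≤ x ∧ A.mulVec x = b) :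
    ∃ y : m → ℝ, 0 ≤ Aᵀ.mulVec y ∧ b ⬝ᵥ y < 0 := by
  set C : Set (m → ℝ) := {c | ∃ x : n → ℝ, 0 ≤ x ∧ ∑ j, x j • (fun i => A i j) = c} with hC
  have hbC : b ∉ C := by
    intro ⟨x, hx, hsum⟩
    exact hb ⟨x, hx, by rw [mulVec_eq_sum_cols]; exact hsum⟩
  have hconv : Convex ℝ C := by
    rintro c ⟨x, hx, rfl⟩ c' ⟨x', hx', rfl⟩ α β hα hβ hαβ
    refine ⟨fun j => α * x j + β * x' j,
      fun j => add_nonneg (mul_nonneg hα (hx j)) (mul_nonneg hβ (hx' j)), ?_⟩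
    rw [Finset.smul_sum, Finset.smul_sum, ← Finset.sum_add_distrib]
    refine Finset.sum_congr rfl fun j _ => ?_
    simp [add_smul, smul_smul]
  have hscale : ∀ (t : ℝ), 0 ≤ t → ∀ c ∈ C, t • c ∈ C := by
    rintro t ht c ⟨x, hx, rfl⟩
    refine ⟨fun j => t * x j, fun j => mul_nonneg ht (hx j), ?_⟩
    rw [Finset.smul_sum]
    exact Finset.sum_congr rfl fun j _ => (smul_smul t (x j) _).symm
  obtain ⟨f, u, hfu, hub⟩ := geometric_hahn_banach_closed_point hconv hcl hbC
  have h0C : (0 : m → ℝ) ∈ C := ⟨0, le_refl _, by simp⟩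
  have hu0 : 0 < u := by have := hfu 0 h0C; simpa using this
  have hfC : ∀ c ∈ C, f c ≤ 0 := by
    intro c hc
    by_contra hfc
    push_neg at hfc
    have hmem : ((u + 1) / f c) • c ∈ C :=
      hscale _ (div_nonneg (by linarith) hfc.le) c hc
    have h1 := hfu _ hmem
    rw [f.map_smul] at h1
    have h2 : ((u + 1) / f c) * f c = u + 1 := div_mul_cancel₀ _ (ne_of_gt hfc)
    simp only [smul_eq_mul, h2] at h1
    linarith
  set y0 : m → ℝ := fun i => f (fun j => if i = j then 1 else 0) with hy0
  have hfdot : ∀ w : m → ℝ, f w = w ⬝ᵥ y0 := by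
    intro w
    conv_lhs => rw [pi_eq_sum_univ w]
    rw [map_sum]
    simp only [ContinuousLinearMap.map_smul, smul_eq_mul]
    rfl
  refine ⟨-y0, ?_, ?_⟩
  · intro j
    have hcol : (fun i => A i j) ∈ C := by
      refine ⟨fun j' => if j = j' then 1 else 0, fun j' => by dsimp; split <;> norm_num, ?_⟩
      simp [ite_smul, Finset.sum_ite_eq]
    have hle := hfC _ hcol
    rw [hfdot] at hle
    have heq : Aᵀ.mulVec (-y0) j = -((fun i => A i j) ⬝ᵥ y0) := by
      simp [Matrix.mulVec, dotProduct, Matrix.transpose_apply, mul_neg]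
    rw [Pi.zero_apply, heq]
    linarith
  · have hfb : 0 < f b := lt_trans hu0 hub
    rw [hfdot] at hfb
    simp only [dotProduct_neg]
    linarith

lemma farkas' {m n : Type*} [Fintype m] [Fintype n] [DecidableEq m] [DecidableEq n]
    (A : Matrix m n ℝ) (b : m → ℝ)
    (hb : ¬ ∃ x : n → ℝ, 0 ≤ x ∧ A.mulVec x = b) :
    ∃ y : m → ℝ, 0 ≤ Aᵀ.mulVec y ∧ b ⬝ᵥ y < 0 :=
  farkas A b (isClosed_fg_cone _ (conic_caratheodory _)) hb


lemma gale {m n : Type*} [Fintype m] [Fintype n] [DecidableEq m] [DecidableEq n]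
    (A : Matrix m n ℝ) (b : m → ℝ)
    (hb : ¬ ∃ x : n → ℝ, 0 ≤ x ∧ A.mulVec x ≤ b) :
    ∃ y : m → ℝ, 0 ≤ y ∧ 0 ≤ Aᵀ.mulVec y ∧ b ⬝ᵥ y < 0 := by
  set B : Matrix m (n ⊕ m) ℝ :=
    Matrix.of fun i j => Sum.elim (fun j' => A i j') (fun i' => if i' = i then (1:ℝ) else 0) j with hB
  have hBmul : ∀ z : n ⊕ m → ℝ, ∀ i, B.mulVec z i = A.mulVec (z ∘ Sum.inl) i + z (Sum.inr i) := by
    intro z i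
    simp only [Matrix.mulVec, dotProduct, hB, Fintype.sum_sum_type, Matrix.of_apply,
      Sum.elim_inl, Sum.elim_inr, Function.comp]
    congr 1
    rw [Finset.sum_eq_single i]
    · simp
    · intro i' _ hi'; simp [hi']
    · intro h; exact absurd (Finset.mem_univ i) h
  have hB' : ¬ ∃ z : n ⊕ m → ℝ, 0 ≤ z ∧ B.mulVec z = b := by
    rintro ⟨z, hz, hzb⟩
    refine hb ⟨z ∘ Sum.inl, fun j => hz _, fun i => ?_⟩
    have := congrFun hzb i
    rw [hBmul] at this
    have h2 := hz (Sum.inr i)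
    simp only [Pi.zero_apply] at h2
    simp only at this ⊢
    linarith
  obtain ⟨y, hy1, hy2⟩ := farkas' B b hB'
  refine ⟨y, fun i => ?_, fun j => ?_, hy2⟩
  · have := hy1 (Sum.inr i)
    simp only [Matrix.mulVec, dotProduct, Matrix.transpose_apply, hB, Matrix.of_apply,
      Sum.elim_inr, Pi.zero_apply] at this ⊢
    rw [Finset.sum_eq_single i] at this
    · simpa using this
    · intro i' _ hi'; simp [Ne.symm hi']
    · intro h; exact absurd (Finset.mem_univ i) h
  · have := hy1 (Sum.inl j)
    simpa only [Matrix.mulVec, dotProduct, Matrix.transpose_apply, hB, Matrix.of_apply,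
      Sum.elim_inl, Pi.zero_apply] using this


lemma dot_le_dot {ι : Type*} [Fintype ι] {u a b : ι → ℝ} (hu : 0 ≤ u) (hab : a ≤ b) :
    u ⬝ᵥ a ≤ u ⬝ᵥ b :=
  Finset.sum_le_sum fun i _ => mul_le_mul_of_nonneg_left (hab i) (hu i)

lemma dot_nonneg' {ι : Type*} [Fintype ι] {u a : ι → ℝ} (hu : 0 ≤ u) (ha : 0 ≤ a) :
    0 ≤ u ⬝ᵥ a :=
  Finset.sum_nonneg fun i _ => mul_nonneg (hu i) (ha i)

lemma transpose_dot {m n : Type*} [Fintype m] [Fintype n]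
    (A : Matrix m n ℝ) (x : n → ℝ) (y : m → ℝ) :
    (Aᵀ.mulVec y) ⬝ᵥ x = y ⬝ᵥ (A.mulVec x) := by
  simp only [Matrix.mulVec, dotProduct, Matrix.transpose_apply, Finset.sum_mul,
    Finset.mul_sum]
  rw [Finset.sum_comm]
  exact Finset.sum_congr rfl fun i _ => Finset.sum_congr rfl fun j _ => by ring

lemma lp_weak {m n : Type*} [Fintype m] [Fintype n]
    (A : Matrix m n ℝ) (b : m → ℝ) (c : n → ℝ) {x : n → ℝ} {y : m → ℝ}
    (hx0 : 0 ≤ x) (hxf : A.mulVec x ≤ b) (hy0 : 0 ≤ y) (hyf : c ≤ Aᵀ.mulVec y) :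
    c ⬝ᵥ x ≤ b ⬝ᵥ y := by
  have h1 : c ⬝ᵥ x ≤ (Aᵀ.mulVec y) ⬝ᵥ x := by
    rw [dotProduct_comm c x, dotProduct_comm _ x]
    exact dot_le_dot hx0 hyf
  have h2 : y ⬝ᵥ (A.mulVec x) ≤ y ⬝ᵥ b := dot_le_dot hy0 hxf
  rw [transpose_dot] at h1
  rw [dotProduct_comm b y]
  linarith

lemma lp_strong {m n : Type*} [Fintype m] [Fintype n] [DecidableEq m] [DecidableEq n]
    (A : Matrix m n ℝ) (b : m → ℝ) (c : n → ℝ)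
    (hP : ∃ x : n → ℝ, 0 ≤ x ∧ A.mulVec x ≤ b)
    (hD : ∃ y : m → ℝ, 0 ≤ y ∧ c ≤ Aᵀ.mulVec y) :
    ∃ (x : n → ℝ) (y : m → ℝ), 0 ≤ x ∧ A.mulVec x ≤ b ∧ 0 ≤ y ∧ c ≤ Aᵀ.mulVec y ∧
      b ⬝ᵥ y ≤ c ⬝ᵥ x := by
  classical
  obtain ⟨x0, hx00, hx0f⟩ := hP
  obtain ⟨y0, hy00, hy0f⟩ := hD
  -- combined system in variables (x, y) : n ⊕ m
  set G : Matrix ((m ⊕ n) ⊕ Unit) (n ⊕ m) ℝ :=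
    Matrix.of fun i j =>
      Sum.elim (fun i' => Sum.elim (fun ii => Sum.elim (fun jj => A ii jj) (fun _ => 0) j)
        (fun ii => Sum.elim (fun _ => 0) (fun jj => -A jj ii) j) i')
        (fun _ => Sum.elim (fun jj => -c jj) (fun jj => b jj) j) i with hG
  set d : (m ⊕ n) ⊕ Unit → ℝ :=
    Sum.elim (Sum.elim b (fun i => -c i)) (fun _ => 0) with hd
  by_cases hfeas : ∃ z : n ⊕ m → ℝ, 0 ≤ z ∧ G.mulVec z ≤ d
  · obtain ⟨z, hz0, hzf⟩ := hfeas
    set x := z ∘ Sum.inl with hx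
    set y := z ∘ Sum.inr with hy
    have hGx : ∀ ii : m, G.mulVec z (Sum.inl (Sum.inl ii)) = A.mulVec x ii := by
      intro ii
      simp [hG, Matrix.mulVec, dotProduct, Fintype.sum_sum_type, hx]
    have hGy : ∀ ii : n, G.mulVec z (Sum.inl (Sum.inr ii)) = -(Aᵀ.mulVec y ii) := by
      intro ii
      simp [hG, Matrix.mulVec, dotProduct, Fintype.sum_sum_type, hy,
        Matrix.transpose_apply, Finset.sum_neg_distrib]
    have hGu : G.mulVec z (Sum.inr ()) = -(c ⬝ᵥ x) + b ⬝ᵥ y := by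
      simp [hG, Matrix.mulVec, dotProduct, Fintype.sum_sum_type, hx, hy,
        Finset.sum_neg_distrib, mul_comm]
    refine ⟨x, y, fun j => hz0 _, fun ii => ?_, fun i => hz0 _, fun ii => ?_, ?_⟩
    · have := hzf (Sum.inl (Sum.inl ii)); rw [hGx] at this; simpa [hd] using this
    · have := hzf (Sum.inl (Sum.inr ii)); rw [hGy] at this; simp [hd] at this; linarith
    · have := hzf (Sum.inr ()); rw [hGu] at this; simp [hd] at this; linarith
  · exfalso
    obtain ⟨w, hw0, hwt, hwd⟩ := gale G d hfeas
    set u := fun i => w (Sum.inl (Sum.inl i)) with hu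
    set v := fun i => w (Sum.inl (Sum.inr i)) with hv
    set θ := w (Sum.inr ()) with hθ
    have hwt1 : ∀ j : n, 0 ≤ Aᵀ.mulVec u j - θ * c j := by
      intro j
      have := hwt (Sum.inl j)
      simpa [hG, Matrix.mulVec, dotProduct, Matrix.transpose_apply,
        Fintype.sum_sum_type, hu, hθ, mul_comm] using this
    have hwt2 : ∀ i : m, 0 ≤ -(A.mulVec v i) + θ * b i := by
      intro i
      have := hwt (Sum.inr i)
      simpa [hG, Matrix.mulVec, dotProduct, Matrix.transpose_apply,
        Fintype.sum_sum_type, hv, hθ, mul_comm, Finset.sum_neg_distrib] using this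
    have hwdval : b ⬝ᵥ u - c ⬝ᵥ v < 0 := by
      have : d ⬝ᵥ w = b ⬝ᵥ u - c ⬝ᵥ v := by
        simp [hd, dotProduct, Fintype.sum_sum_type, hu, hv, sub_eq_add_neg,
          Finset.sum_neg_distrib, neg_mul]
      rwa [this] at hwd
    have hθ0 : 0 ≤ θ := hw0 (Sum.inr ())
    rcases eq_or_lt_of_le hθ0 with hθeq | hθpos
    · -- θ = 0
      have hAtu : ∀ j, 0 ≤ Aᵀ.mulVec u j := by
        intro j; have := hwt1 j; rw [← hθeq] at this; simpa using this
      have hAv : ∀ i, A.mulVec v i ≤ 0 := by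
        intro i; have := hwt2 i; rw [← hθeq] at this; simpa using this
      have hu0 : 0 ≤ u := fun i => hw0 (Sum.inl (Sum.inl i))
      have hv0 : 0 ≤ v := fun i => hw0 (Sum.inl (Sum.inr i))
      have h1 : 0 ≤ b ⬝ᵥ u := by
        have ha : u ⬝ᵥ A.mulVec x0 ≤ u ⬝ᵥ b := dot_le_dot hu0 hx0f
        have hb : 0 ≤ (Aᵀ.mulVec u) ⬝ᵥ x0 := dot_nonneg' (fun j => hAtu j) hx00
        rw [transpose_dot] at hb
        rw [dotProduct_comm b u]
        linarith
      have h2 : c ⬝ᵥ v ≤ 0 := by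
        have ha : v ⬝ᵥ c ≤ v ⬝ᵥ (Aᵀ.mulVec y0) := dot_le_dot hv0 hy0f
        have hb : y0 ⬝ᵥ A.mulVec v ≤ 0 := by
          apply Finset.sum_nonpos
          intro i _
          exact mul_nonpos_of_nonneg_of_nonpos (hy00 i) (hAv i)
        rw [dotProduct_comm v (Aᵀ.mulVec y0), transpose_dot] at ha
        rw [dotProduct_comm c v]
        linarith
      linarith
    · -- θ > 0
      set x' := θ⁻¹ • v with hx'
      set y' := θ⁻¹ • u with hy'
      have hx'0 : 0 ≤ x' := fun j => mul_nonneg (inv_nonneg.mpr hθ0) (hw0 (Sum.inl (Sum.inr j)))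
      have hy'0 : 0 ≤ y' := fun i => mul_nonneg (inv_nonneg.mpr hθ0) (hw0 (Sum.inl (Sum.inl i)))
      have hx'f : A.mulVec x' ≤ b := by
        intro i
        rw [hx', Matrix.mulVec_smul]
        have := hwt2 i
        have h2 : A.mulVec v i ≤ θ * b i := by linarith
        have := mul_le_mul_of_nonneg_left h2 (inv_nonneg.mpr hθ0)
        rw [← mul_assoc, inv_mul_cancel₀ (ne_of_gt hθpos), one_mul] at this
        simpa using this
      have hy'f : c ≤ Aᵀ.mulVec y' := by
        intro j
        rw [hy', Matrix.mulVec_smul]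
        have := hwt1 j
        have h2 : θ * c j ≤ Aᵀ.mulVec u j := by linarith
        have := mul_le_mul_of_nonneg_left h2 (inv_nonneg.mpr hθ0)
        rw [← mul_assoc, inv_mul_cancel₀ (ne_of_gt hθpos), one_mul] at this
        simpa using this
      have hweak := lp_weak A b c hx'0 hx'f hy'0 hy'f
      have hcx : c ⬝ᵥ x' = θ⁻¹ * (c ⬝ᵥ v) := by
        simp only [hx', dotProduct, Finset.mul_sum, Pi.smul_apply, smul_eq_mul]
        exact Finset.sum_congr rfl fun j _ => by ring
      have hby : b ⬝ᵥ y' = θ⁻¹ * (b ⬝ᵥ u) := by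
        simp only [hy', dotProduct, Finset.mul_sum, Pi.smul_apply, smul_eq_mul]
        exact Finset.sum_congr rfl fun i _ => by ring
      rw [hcx, hby] at hweak
      have := mul_lt_mul_of_pos_left hwdval (inv_pos.mpr hθpos)
      rw [mul_sub, mul_zero] at this
      linarith

lemma lp_unbounded {m n : Type*} [Fintype m] [Fintype n] [DecidableEq m] [DecidableEq n]
    (A : Matrix m n ℝ) (b : m → ℝ) (c : n → ℝ)
    (hP : ∃ x : n → ℝ, 0 ≤ x ∧ A.mulVec x ≤ b)
    (hD : ¬ ∃ y : m → ℝ, 0 ≤ y ∧ c ≤ Aᵀ.mulVec y) :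
    ∀ R : ℝ, ∃ x : n → ℝ, 0 ≤ x ∧ A.mulVec x ≤ b ∧ R < c ⬝ᵥ x := by
  obtain ⟨x0, hx00, hx0f⟩ := hP
  have hD' : ¬ ∃ y : m → ℝ, 0 ≤ y ∧ (-Aᵀ).mulVec y ≤ -c := by
    rintro ⟨y, hy0, hyf⟩
    refine hD ⟨y, hy0, fun j => ?_⟩
    have := hyf j
    rw [Matrix.neg_mulVec] at this
    simp only [Pi.neg_apply] at this
    linarith
  obtain ⟨e, he0, het, hed⟩ := gale (-Aᵀ) (-c) hD'
  have hAe : ∀ i, A.mulVec e i ≤ 0 := by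
    intro i
    have := het i
    rw [Matrix.transpose_neg, Matrix.transpose_transpose, Matrix.neg_mulVec] at this
    simp only [Pi.zero_apply, Pi.neg_apply] at this
    linarith
  have hce : 0 < c ⬝ᵥ e := by
    rw [neg_dotProduct] at hed
    linarith
  intro R
  set τ : ℝ := max 0 ((R - c ⬝ᵥ x0) / (c ⬝ᵥ e)) + 1 with hτ
  have hτ0 : 0 ≤ τ := by
    rw [hτ]
    have := le_max_left 0 ((R - c ⬝ᵥ x0) / (c ⬝ᵥ e)); linarith
  have hτbig : (R - c ⬝ᵥ x0) / (c ⬝ᵥ e) < τ := by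
    rw [hτ]
    have := le_max_right 0 ((R - c ⬝ᵥ x0) / (c ⬝ᵥ e)); linarith
  refine ⟨x0 + τ • e, fun j => add_nonneg (hx00 j) (mul_nonneg hτ0 (he0 j)), fun i => ?_, ?_⟩
  · rw [Matrix.mulVec_add, Matrix.mulVec_smul]
    have h1 : τ • A.mulVec e i ≤ 0 := by
      simp only [Pi.smul_apply, smul_eq_mul]
      exact mul_nonpos_of_nonneg_of_nonpos hτ0 (hAe i)
    have h2 := hx0f i
    simp only [Pi.add_apply, Pi.smul_apply, smul_eq_mul] at *
    linarith
  · rw [dotProduct_add]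
    have h1 : c ⬝ᵥ (τ • e) = τ * (c ⬝ᵥ e) := by
      simp only [dotProduct, Pi.smul_apply, smul_eq_mul, Finset.mul_sum]
      exact Finset.sum_congr rfl fun j _ => by ring
    rw [h1]
    have := (div_lt_iff₀ hce).mp hτbig
    linarith

/-- **Proposition 7 (inner maximization with a polyhedral penalty).**
For the nonempty polyhedron `Z = {z : Hz ≤ h}` (`h ≥ 0`) and the polyhedral penalty
`p(ζ) = max{λᵀζ − η : (λ,η) ∈ V}` (with `V` bounded, containing the origin and admitting a
Slater point), for any `a` and `k ≥ 0`:
`max_{z ∈ Z} (aᵀz − k·p(z)) = min{βᵀh + η : β ≥ 0, η ≥ 0, (a − Hᵀβ, η, k) ∈ V̄}`,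
where `V̄` is the perspective cone of `V`. -/
theorem innermax_polyhedral_penalty {nz nμ nm nh : ℕ}
    (H : Matrix (Fin nh) (Fin nz) ℝ) (h : Fin nh → ℝ) (hh : 0 ≤ h)
    (hZne : ∃ z : Fin nz → ℝ, H.mulVec z ≤ h)
    (M : Matrix (Fin nm) (Fin nz) ℝ) (N : Matrix (Fin nm) (Fin nμ) ℝ)
    (s t : Fin nm → ℝ)
    (V : Set ((Fin nz → ℝ) × ℝ))
    (hV : V = {le | 0 ≤ le.2 ∧
      ∃ μ : Fin nμ → ℝ, M.mulVec le.1 + N.mulVec μ + le.2 • s ≤ t})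
    (hVbdd : Bornology.IsBounded V)
    (hV0 : ((0 : Fin nz → ℝ), (0 : ℝ)) ∈ V)
    (hslater : ∃ μhat : Fin nμ → ℝ, ∀ i, (N.mulVec μhat) i < t i)
    (p : (Fin nz → ℝ) → ℝ)
    (hp : ∀ ζ, p ζ = sSup {v : ℝ | ∃ le ∈ V, v = le.1 ⬝ᵥ ζ - le.2})
    (a : Fin nz → ℝ) (k : ℝ) (hk : 0 ≤ k) :
    sSup {v : ℝ | ∃ z : Fin nz → ℝ, H.mulVec z ≤ h ∧ v = a ⬝ᵥ z - k * p z}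
      = sInf {v : ℝ | ∃ (β : Fin nh → ℝ) (η : ℝ), 0 ≤ β ∧ 0 ≤ η ∧
          (∃ μ : Fin nμ → ℝ,
            M.mulVec (a - Hᵀ.mulVec β) + N.mulVec μ + η • s ≤ k • t) ∧
          v = β ⬝ᵥ h + η} := by
  classical
  obtain ⟨z0, hz0⟩ := hZne
  obtain ⟨μ0, hμ0⟩ : ∃ μ0 : Fin nμ → ℝ, N.mulVec μ0 ≤ t := by
    rw [hV] at hV0
    obtain ⟨-, μ0, hμ0⟩ := hV0
    exact ⟨μ0, by simpa using hμ0⟩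
  obtain ⟨rV, hrV⟩ := hVbdd.exists_norm_le
  set S : Set ℝ := {v : ℝ | ∃ z : Fin nz → ℝ, H.mulVec z ≤ h ∧ v = a ⬝ᵥ z - k * p z} with hSdef
  set D : Set ℝ := {v : ℝ | ∃ (β : Fin nh → ℝ) (η : ℝ), 0 ≤ β ∧ 0 ≤ η ∧
      (∃ μ : Fin nμ → ℝ,
        M.mulVec (a - Hᵀ.mulVec β) + N.mulVec μ + η • s ≤ k • t) ∧
      v = β ⬝ᵥ h + η} with hDdef
  -- facts about p
  have hpset_ne : ∀ ζ : Fin nz → ℝ, {v : ℝ | ∃ le ∈ V, v = le.1 ⬝ᵥ ζ - le.2}.Nonempty :=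
    fun ζ => ⟨0, ⟨((0 : Fin nz → ℝ), (0:ℝ)), hV0, by simp⟩⟩
  have hpub : ∀ (ζ : Fin nz → ℝ) (le : (Fin nz → ℝ) × ℝ), le ∈ V →
      le.1 ⬝ᵥ ζ - le.2 ≤ rV * (∑ j, |ζ j|) + rV := by
    intro ζ le hle
    have hn := hrV le hle
    have h1 : ‖le.1‖ ≤ rV := le_trans (norm_fst_le le) hn
    have h2 : |le.2| ≤ rV := le_trans (norm_snd_le le) hn
    have h3 : le.1 ⬝ᵥ ζ ≤ rV * ∑ j, |ζ j| := by
      calc le.1 ⬝ᵥ ζ ≤ ∑ j, |le.1 j * ζ j| := Finset.sum_le_sum fun j _ => le_abs_self _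
        _ = ∑ j, |le.1 j| * |ζ j| := by simp [abs_mul]
        _ ≤ ∑ j, rV * |ζ j| := Finset.sum_le_sum fun j _ =>
            mul_le_mul_of_nonneg_right (le_trans (norm_le_pi_norm le.1 j) h1) (abs_nonneg _)
        _ = rV * ∑ j, |ζ j| := (Finset.mul_sum _ _ _).symm
    have h4 : -le.2 ≤ rV := by
      have := neg_abs_le le.2; linarith
    linarith
  have hpbdd : ∀ ζ : Fin nz → ℝ, BddAbove {v : ℝ | ∃ le ∈ V, v = le.1 ⬝ᵥ ζ - le.2} :=
    fun ζ => ⟨rV * (∑ j, |ζ j|) + rV, fun v ⟨le, hle, hv⟩ => hv ▸ hpub ζ le hle⟩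
  have hple : ∀ (ζ : Fin nz → ℝ) (le : (Fin nz → ℝ) × ℝ), le ∈ V → le.1 ⬝ᵥ ζ - le.2 ≤ p ζ :=
    fun ζ le hle => (hp ζ) ▸ le_csSup (hpbdd ζ) ⟨le, hle, rfl⟩
  have hpmax : ∀ (ζ : Fin nz → ℝ) (B : ℝ), (∀ le ∈ V, le.1 ⬝ᵥ ζ - le.2 ≤ B) → p ζ ≤ B :=
    fun ζ B hB => (hp ζ) ▸ csSup_le (hpset_ne ζ) (fun v ⟨le, hle, hv⟩ => hv ▸ hB le hle)
  -- the LP data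
  set A' : Matrix ((Fin nμ ⊕ Fin nμ) ⊕ (Fin nh ⊕ Unit)) (Fin nm) ℝ := Matrix.of fun ρ i =>
    Sum.elim (Sum.elim (fun q => N i q) (fun q => -(N i q)))
      (Sum.elim (fun r => (H * Mᵀ) r i) (fun _ => -(s i))) ρ with hA'
  set b' : ((Fin nμ ⊕ Fin nμ) ⊕ (Fin nh ⊕ Unit)) → ℝ :=
    Sum.elim (Sum.elim (0 : Fin nμ → ℝ) (0 : Fin nμ → ℝ)) (Sum.elim h (fun _ => 1)) with hb'
  set c' : Fin nm → ℝ := fun i => M.mulVec a i - k * t i with hc'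
  -- F1 : primal feasibility
  have hPfeas : ∃ x : Fin nm → ℝ, 0 ≤ x ∧ A'.mulVec x ≤ b' := by
    refine ⟨0, le_rfl, ?_⟩
    rw [Matrix.mulVec_zero]
    rintro (⟨q | q⟩ | ⟨r | u⟩) <;> simp [hb']
    exact hh r
  -- shared computations
  have hAty : ∀ (y : ((Fin nμ ⊕ Fin nμ) ⊕ (Fin nh ⊕ Unit)) → ℝ) (i : Fin nm),
      A'ᵀ.mulVec y i =
        N.mulVec (fun q => y (Sum.inl (Sum.inl q))) i
        - N.mulVec (fun q => y (Sum.inl (Sum.inr q))) i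
        + M.mulVec (Hᵀ.mulVec (fun r => y (Sum.inr (Sum.inl r)))) i
        - s i * y (Sum.inr (Sum.inr ())) := by
    intro y i
    have hMH : M.mulVec (Hᵀ.mulVec (fun r => y (Sum.inr (Sum.inl r)))) i
        = ∑ r, (H * Mᵀ) r i * y (Sum.inr (Sum.inl r)) := by
      rw [Matrix.mulVec_mulVec]
      have h1 : (M * Hᵀ) = (H * Mᵀ)ᵀ := by
        rw [Matrix.transpose_mul, Matrix.transpose_transpose]
      rw [h1]
      simp [Matrix.mulVec, dotProduct, Matrix.transpose_apply]
    rw [hMH]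
    simp only [Matrix.mulVec, dotProduct, Matrix.transpose_apply, hA', Matrix.of_apply,
      Fintype.sum_sum_type, Sum.elim_inl, Sum.elim_inr, Finset.univ_unique,
      Finset.sum_singleton, neg_mul, Finset.sum_neg_distrib]
    ring
  have hbval : ∀ (y : ((Fin nμ ⊕ Fin nμ) ⊕ (Fin nh ⊕ Unit)) → ℝ), b' ⬝ᵥ y =
      (∑ r, h r * y (Sum.inr (Sum.inl r))) + y (Sum.inr (Sum.inr ())) := by
    intro y
    simp [hb', dotProduct, Fintype.sum_sum_type, Finset.univ_unique, Finset.sum_singleton]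
  -- F2 forward : dual solution yields an element of D
  have hdual_to_D : ∀ y, 0 ≤ y → c' ≤ A'ᵀ.mulVec y → (b' ⬝ᵥ y) ∈ D := by
    intro y hy0 hyf
    refine ⟨fun r => y (Sum.inr (Sum.inl r)), y (Sum.inr (Sum.inr ())),
      fun r => hy0 _, hy0 _,
      ⟨(fun q => y (Sum.inl (Sum.inr q))) - (fun q => y (Sum.inl (Sum.inl q))), ?_⟩, ?_⟩
    · intro i
      have h1 := hyf i
      rw [hAty y i] at h1
      simp only [hc'] at h1
      simp only [Pi.add_apply, Pi.smul_apply, smul_eq_mul, Matrix.mulVec_sub, Pi.sub_apply]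
      linarith
    · rw [hbval]
      have : (fun r => y (Sum.inr (Sum.inl r))) ⬝ᵥ h = ∑ r, h r * y (Sum.inr (Sum.inl r)) := by
        simp [dotProduct, mul_comm]
      rw [this]
  -- F2 backward : element data of D yields dual solution
  have hD_to_dual : ∀ (β : Fin nh → ℝ) (η : ℝ) (μ : Fin nμ → ℝ), 0 ≤ β → 0 ≤ η →
      (M.mulVec (a - Hᵀ.mulVec β) + N.mulVec μ + η • s ≤ k • t) →
      ∃ y, 0 ≤ y ∧ c' ≤ A'ᵀ.mulVec y ∧ b' ⬝ᵥ y = β ⬝ᵥ h + η := by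
    intro β η μ hβ hη hcon
    refine ⟨Sum.elim (Sum.elim (fun q => max (-(μ q)) 0) (fun q => max (μ q) 0))
      (Sum.elim β (fun _ => η)), ?_, ?_, ?_⟩
    · rintro (⟨q | q⟩ | ⟨r | u⟩)
      · simp [le_max_right]
      · simp [le_max_right]
      · simpa using hβ r
      · simpa using hη
    · intro i
      rw [hAty _ i]
      simp only [Sum.elim_inl, Sum.elim_inr]
      have hμeq : (fun q => max (-(μ q)) 0) - (fun q => max (μ q) 0) = -μ := by
        funext q
        rcases le_total 0 (μ q) with hq | hq
        · simp only [Pi.sub_apply, Pi.neg_apply, max_eq_right (neg_nonpos.mpr hq),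
            max_eq_left hq]
          ring
        · simp only [Pi.sub_apply, Pi.neg_apply, max_eq_left (neg_nonneg.mpr hq),
            max_eq_right hq]
          ring
      have hNdiff : N.mulVec (fun q => max (-(μ q)) 0) i - N.mulVec (fun q => max (μ q) 0) i
          = -(N.mulVec μ i) := by
        rw [← Pi.sub_apply (N.mulVec _) (N.mulVec _), ← Matrix.mulVec_sub, hμeq,
          Matrix.mulVec_neg, Pi.neg_apply]
      have h1 := hcon i
      simp only [Pi.add_apply, Pi.smul_apply, smul_eq_mul, Matrix.mulVec_sub, Pi.sub_apply] at h1
      simp only [hc']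
      linarith
    · rw [hbval]
      simp only [Sum.elim_inl, Sum.elim_inr]
      have : β ⬝ᵥ h = ∑ r, h r * β r := by
        simp [dotProduct, mul_comm]
      rw [this]
  -- F3 : primal solution yields dominating element of S
  have hprimal_to_S : ∀ u, 0 ≤ u → A'.mulVec u ≤ b' → ∃ w ∈ S, c' ⬝ᵥ u ≤ w := by
    intro u hu0 huf
    have hNu : ∀ q, (Nᵀ.mulVec u) q = 0 := by
      intro q
      have h1 := huf (Sum.inl (Sum.inl q))
      have h2 := huf (Sum.inl (Sum.inr q))
      simp only [hA', hb', Matrix.mulVec, dotProduct, Matrix.of_apply, Sum.elim_inl,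
        Sum.elim_inr, Pi.zero_apply, neg_mul, Finset.sum_neg_distrib] at h1 h2
      simp only [Matrix.mulVec, dotProduct, Matrix.transpose_apply]
      linarith
    have hHMu : ∀ r, ((H * Mᵀ).mulVec u) r ≤ h r := by
      intro r
      have h1 := huf (Sum.inr (Sum.inl r))
      simpa [hA', hb', Matrix.mulVec, dotProduct] using h1
    have hsu : -(1:ℝ) ≤ s ⬝ᵥ u := by
      have h1 := huf (Sum.inr (Sum.inr ()))
      simp only [hA', hb', Matrix.mulVec, dotProduct, Matrix.of_apply, Sum.elim_inl,
        Sum.elim_inr, neg_mul, Finset.sum_neg_distrib] at h1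
      simp only [dotProduct]
      linarith
    set z : Fin nz → ℝ := Mᵀ.mulVec u with hz
    have hzf : H.mulVec z ≤ h := by
      intro r
      rw [hz, Matrix.mulVec_mulVec]
      exact hHMu r
    have haz : a ⬝ᵥ z = u ⬝ᵥ M.mulVec a := by
      rw [dotProduct_comm, hz]
      exact transpose_dot M a u
    have hpz : p z ≤ t ⬝ᵥ u := by
      apply hpmax
      rintro ⟨lam, η⟩ hle
      rw [hV] at hle
      obtain ⟨hη, μw, hμw⟩ := hle
      simp only at hη ⊢
      have hlz : lam ⬝ᵥ z = u ⬝ᵥ M.mulVec lam := by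
        rw [dotProduct_comm, hz]
        exact transpose_dot M lam u
      have hdle : u ⬝ᵥ (M.mulVec lam + N.mulVec μw + η • s) ≤ u ⬝ᵥ t := dot_le_dot hu0 hμw
      rw [dotProduct_add, dotProduct_add] at hdle
      have hNw : u ⬝ᵥ N.mulVec μw = 0 := by
        rw [← transpose_dot N μw u]
        have hNz : Nᵀ.mulVec u = 0 := funext hNu
        rw [hNz, zero_dotProduct]
      have hsw : -η ≤ u ⬝ᵥ (η • s) := by
        have h1 : u ⬝ᵥ (η • s) = η * (s ⬝ᵥ u) := by
          rw [dotProduct_comm, smul_dotProduct, smul_eq_mul]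
        rw [h1]
        have h2 := mul_le_mul_of_nonneg_left hsu hη
        simpa using h2
      have htu : u ⬝ᵥ t = t ⬝ᵥ u := dotProduct_comm u t
      rw [hlz]
      linarith
    refine ⟨a ⬝ᵥ z - k * p z, ⟨z, hzf, rfl⟩, ?_⟩
    have hcu : c' ⬝ᵥ u = u ⬝ᵥ M.mulVec a - k * (t ⬝ᵥ u) := by
      simp only [hc', dotProduct, sub_mul, Finset.sum_sub_distrib, Finset.mul_sum]
      congr 1
      · exact Finset.sum_congr rfl fun i _ => mul_comm _ _
      · exact Finset.sum_congr rfl fun i _ => by ring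
    rw [hcu, ← haz]
    have h2 := mul_le_mul_of_nonneg_left hpz hk
    linarith
  -- F4 : weak duality between S and D
  have hweak : ∀ w ∈ S, ∀ r ∈ D, w ≤ r := by
    rintro w ⟨z, hzf, rfl⟩ r ⟨β, η, hβ, hη, ⟨μ, hcon⟩, rfl⟩
    have hβh : (Hᵀ.mulVec β) ⬝ᵥ z ≤ β ⬝ᵥ h := by
      rw [transpose_dot H z β]
      exact dot_le_dot hβ hzf
    rcases eq_or_lt_of_le hk with hk0 | hkpos
    · -- k = 0
      have hcon0 : M.mulVec (a - Hᵀ.mulVec β) + N.mulVec μ + η • s ≤ 0 := by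
        rw [← hk0] at hcon
        simpa [zero_smul] using hcon
      have hlamzero : a - Hᵀ.mulVec β = 0 := by
        by_contra hne
        obtain ⟨j, hj⟩ := Function.ne_iff.mp hne
        have hrV0 : 0 ≤ rV := le_trans (norm_nonneg _) (hrV _ hV0)
        set lam' : Fin nz → ℝ := a - Hᵀ.mulVec β with hlam'
        have hj' : lam' j ≠ 0 := by simpa using hj
        have hjabs : 0 < |lam' j| := abs_pos.mpr hj'
        set τ : ℝ := (rV + 1) / |lam' j| with hτ
        have hτ0 : 0 ≤ τ := div_nonneg (by linarith) hjabs.le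
        have hmem : ((τ • lam', τ * η) : (Fin nz → ℝ) × ℝ) ∈ V := by
          rw [hV]
          refine ⟨by simpa using mul_nonneg hτ0 hη, μ0 + τ • μ, ?_⟩
          intro i
          have h1 := hcon0 i
          have h2 := hμ0 i
          simp only [Pi.add_apply, Pi.smul_apply, smul_eq_mul, Pi.zero_apply] at h1 h2 ⊢
          have h3 : τ * (M.mulVec lam' i + N.mulVec μ i + η * s i) ≤ 0 :=
            mul_nonpos_of_nonneg_of_nonpos hτ0 h1
          have h4 : M.mulVec (τ • lam') i + (N.mulVec (μ0 + τ • μ) i + τ * η * s i)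
              = τ * (M.mulVec lam' i + N.mulVec μ i + η * s i) + N.mulVec μ0 i := by
            rw [Matrix.mulVec_smul, Matrix.mulVec_add, Matrix.mulVec_smul]
            simp only [Pi.add_apply, Pi.smul_apply, smul_eq_mul]
            ring
          linarith
        have hnorm := hrV _ hmem
        have h3 : |τ * lam' j| ≤ ‖((τ • lam', τ * η) : (Fin nz → ℝ) × ℝ)‖ := by
          have e1 : ‖(τ • lam') j‖ = |τ * lam' j| := by
            rw [Pi.smul_apply, smul_eq_mul, Real.norm_eq_abs]
          rw [← e1]
          exact le_trans (norm_le_pi_norm (τ • lam') j)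
            (norm_fst_le ((τ • lam', τ * η) : (Fin nz → ℝ) × ℝ))
        have h4 : |τ * lam' j| = rV + 1 := by
          rw [abs_mul, abs_of_nonneg hτ0, hτ, div_mul_cancel₀ _ (ne_of_gt hjabs)]
        linarith
      have ha : a = Hᵀ.mulVec β := sub_eq_zero.mp hlamzero
      rw [← hk0, zero_mul, sub_zero, ha]
      linarith
    · -- k > 0
      have hkinv : 0 ≤ k⁻¹ := inv_nonneg.mpr hkpos.le
      have hmem : ((k⁻¹ • (a - Hᵀ.mulVec β), k⁻¹ * η) : (Fin nz → ℝ) × ℝ) ∈ V := by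
        rw [hV]
        refine ⟨by simpa using mul_nonneg hkinv hη, k⁻¹ • μ, ?_⟩
        intro i
        have h1 := hcon i
        simp only [Pi.add_apply, Pi.smul_apply, smul_eq_mul] at h1 ⊢
        calc M.mulVec (k⁻¹ • (a - Hᵀ.mulVec β)) i + N.mulVec (k⁻¹ • μ) i + k⁻¹ * η * s i
            = k⁻¹ * (M.mulVec (a - Hᵀ.mulVec β) i + N.mulVec μ i + η * s i) := by
              rw [Matrix.mulVec_smul, Matrix.mulVec_smul]
              simp only [Pi.smul_apply, smul_eq_mul]
              ring
          _ ≤ k⁻¹ * (k * t i) := mul_le_mul_of_nonneg_left h1 hkinv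
          _ = t i := by
              rw [← mul_assoc, inv_mul_cancel₀ (ne_of_gt hkpos), one_mul]
      have hle := hple z _ hmem
      dsimp only at hle
      have hdot : (k⁻¹ • (a - Hᵀ.mulVec β)) ⬝ᵥ z = k⁻¹ * ((a - Hᵀ.mulVec β) ⬝ᵥ z) := by
        rw [smul_dotProduct, smul_eq_mul]
      rw [hdot] at hle
      have hmul := mul_le_mul_of_nonneg_left hle hkpos.le
      rw [mul_sub, ← mul_assoc, ← mul_assoc, mul_inv_cancel₀ (ne_of_gt hkpos), one_mul,
        one_mul] at hmul
      rw [sub_dotProduct] at hmul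
      linarith
  have hSne : S.Nonempty := ⟨a ⬝ᵥ z0 - k * p z0, z0, hz0, rfl⟩
  have hDlb : ∀ r ∈ D, (0:ℝ) ≤ r := by
    rintro r ⟨β, η, hβ, hη, -, rfl⟩
    have : 0 ≤ β ⬝ᵥ h := dot_nonneg' hβ hh
    linarith
  by_cases hDne : D.Nonempty
  · -- both sides finite
    obtain ⟨r0, hr0⟩ := hDne
    have hSbdd : BddAbove S := ⟨r0, fun w hw => hweak w hw r0 hr0⟩
    have h1 : sSup S ≤ sInf D :=
      le_csInf ⟨r0, hr0⟩ (fun r hr => csSup_le hSne (fun w hw => hweak w hw r hr))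
    have h2 : sInf D ≤ sSup S := by
      obtain ⟨βr, ηr, hβr, hηr, ⟨μr, hμr⟩, hr0val⟩ := hr0
      obtain ⟨ydf, hydf0, hydff, -⟩ := hD_to_dual βr ηr μr hβr hηr hμr
      obtain ⟨xs, ys, hxs0, hxsf, hys0, hysf, hsd⟩ := lp_strong A' b' c' hPfeas ⟨ydf, hydf0, hydff⟩
      obtain ⟨w, hwS, hcw⟩ := hprimal_to_S xs hxs0 hxsf
      calc sInf D ≤ b' ⬝ᵥ ys := csInf_le ⟨0, hDlb⟩ (hdual_to_D ys hys0 hysf)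
        _ ≤ c' ⬝ᵥ xs := hsd
        _ ≤ w := hcw
        _ ≤ sSup S := le_csSup hSbdd hwS
    linarith
  · -- D empty : both sides are the junk value 0
    have hDempty : D = ∅ := Set.not_nonempty_iff_eq_empty.mp hDne
    have hdinf : ¬ ∃ y, 0 ≤ y ∧ c' ≤ A'ᵀ.mulVec y := by
      rintro ⟨y, hy0, hyf⟩
      exact hDne ⟨b' ⬝ᵥ y, hdual_to_D y hy0 hyf⟩
    have hnb : ¬ BddAbove S := by
      rintro ⟨B, hB⟩
      obtain ⟨u, hu0, huf, huv⟩ := lp_unbounded A' b' c' hPfeas hdinf B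
      obtain ⟨w, hwS, hcw⟩ := hprimal_to_S u hu0 huf
      exact absurd (hB hwS) (by linarith)
    rw [hDempty, Real.sInf_empty, Real.sSup_of_not_bddAbove hnb]
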